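/- Let d ≥ 1, m = 2d, and k ∈ ℝ^d, and let Λ_k = Σ_{a∈Fin m} e^{−i k·e(a)} P_a be the diagonal operator of phases on ℂ^m. Then for every n ≥ 1, (Λ_k C_G)^n |s⟩ = ((−1)^{n+1} / m^{(2n−1)/2}) · Σ_{(a_1,…,a_n)∈(Fin m)^n} e^{−i k·(e(a_1)+⋯+e(a_n))} · Ξ₀(a_1,…,a_n) · |a_1⟩, where Ξ₀(a_1,…,a_n) = ∏_{j=1}^{n−1} (m·δ_{a_j,a_{j+1}} − 2). -/

import Mathlib

noncomputable section

open scoped BigOperators RealInnerProductSpace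

/-- The complex Euclidean space `ℂ^m`. -/
abbrev H (m : ℕ) := EuclideanSpace ℂ (Fin m)

/-- The computational orthonormal basis vector `|a⟩`. -/
def ket {m : ℕ} (a : Fin m) : H m := EuclideanSpace.single a 1

/-- The uniform superposition `|s⟩ = (1/√m) Σ_a |a⟩`. -/
def ketS (m : ℕ) : H m := ((Real.sqrt m : ℂ))⁻¹ • ∑ a : Fin m, ket a

/-- The outer product `|x⟩⟨y|`, i.e. `v ↦ ⟪y, v⟫ • x`. -/
def outer {m : ℕ} (x y : H m) : H m →L[ℂ] H m := (innerSL ℂ y).smulRight x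

/-- The projection `P_a = |a⟩⟨a|`. -/
def P {m : ℕ} (a : Fin m) : H m →L[ℂ] H m := outer (ket a) (ket a)

/-- The Grover coin `C_G = 2|s⟩⟨s| - 1`. -/
def groverC (m : ℕ) : H m →L[ℂ] H m := (2 : ℂ) • outer (ketS m) (ketS m) - 1

/-- `Ξ₀(a_1, …, a_n) = ∏_{j=1}^{n-1} (m δ_{a_j, a_{j+1}} - 2)` (empty product is 1). -/
def Xi0 (m n : ℕ) (a : Fin n → Fin m) : ℂ :=
  ∏ j : Fin n, if h : (j : ℕ) + 1 < n then
    ((m : ℂ) * (if a j = a ⟨(j : ℕ) + 1, h⟩ then 1 else 0) - 2) else 1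

/-- The `2d` signed standard basis vectors of `ℝ^d`:
`e(2k) = u_k` and `e(2k+1) = -u_k`. -/
def eR (d : ℕ) (a : Fin (2 * d)) : EuclideanSpace ℝ (Fin d) :=
  EuclideanSpace.single ⟨(a : ℕ) / 2, by have := a.2; omega⟩
    (if (a : ℕ) % 2 = 0 then 1 else -1)

/-- The diagonal phase operator `Λ_k = Σ_a e^{-i k·e(a)} P_a`. -/
def Lambda (d : ℕ) (k : EuclideanSpace ℝ (Fin d)) : H (2 * d) →L[ℂ] H (2 * d) :=
  ∑ a : Fin (2 * d), Complex.exp (-Complex.I * (⟪k, eR d a⟫ : ℝ)) • P a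

/-! ### Auxiliary lemmas -/

lemma outer_apply {m : ℕ} (x y v : H m) : outer x y v = (inner ℂ y v : ℂ) • x := rfl

lemma inner_ket_ket {m : ℕ} (a b : Fin m) :
    (inner ℂ (ket a) (ket b) : ℂ) = if a = b then 1 else 0 := by
  simp only [ket, EuclideanSpace.inner_single_left, EuclideanSpace.single_apply, map_one, one_mul]

lemma sqrt_ne {m : ℕ} (hm : 0 < m) : (Real.sqrt m : ℂ) ≠ 0 := by
  have : (0:ℝ) < Real.sqrt m := Real.sqrt_pos.mpr (by exact_mod_cast hm)
  exact_mod_cast this.ne'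

lemma inner_ketS_ket {m : ℕ} (a : Fin m) :
    (inner ℂ (ketS m) (ket a) : ℂ) = ((Real.sqrt m : ℂ))⁻¹ := by
  rw [ketS, inner_smul_left, sum_inner]
  simp only [inner_ket_ket, Finset.sum_ite_eq', Finset.mem_univ, if_true, map_inv₀,
    Complex.conj_ofReal, mul_one]

lemma inner_ketS_ketS {m : ℕ} (hm : 0 < m) : (inner ℂ (ketS m) (ketS m) : ℂ) = 1 := by
  nth_rewrite 2 [ketS]
  rw [inner_smul_right, inner_sum]
  simp only [inner_ketS_ket, Finset.sum_const, Finset.card_univ, Fintype.card_fin, nsmul_eq_mul]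
  have h := sqrt_ne hm
  field_simp
  rw [pow_two, ← Complex.ofReal_mul, Real.mul_self_sqrt (by positivity)]; norm_cast

lemma groverC_ketS {m : ℕ} (hm : 0 < m) : groverC m (ketS m) = ketS m := by
  simp only [groverC, ContinuousLinearMap.sub_apply, ContinuousLinearMap.smul_apply,
    ContinuousLinearMap.one_apply, outer_apply, inner_ketS_ketS hm, one_smul]
  module

lemma groverC_ket {m : ℕ} (a : Fin m) :
    groverC m (ket a) = ((2:ℂ) * ((Real.sqrt m : ℂ))⁻¹) • ketS m - ket a := by
  simp only [groverC, ContinuousLinearMap.sub_apply, ContinuousLinearMap.smul_apply,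
    ContinuousLinearMap.one_apply, outer_apply, inner_ketS_ket]
  module

lemma Lambda_ket (d : ℕ) (k : EuclideanSpace ℝ (Fin d)) (b : Fin (2 * d)) :
    Lambda d k (ket b) = Complex.exp (-Complex.I * (⟪k, eR d b⟫ : ℝ)) • ket b := by
  simp only [Lambda, ContinuousLinearMap.sum_apply, ContinuousLinearMap.smul_apply, P,
    outer_apply, inner_ket_ket]
  rw [Finset.sum_eq_single b]
  · simp
  · intro a _ hab
    simp only [if_neg hab, zero_smul, smul_zero]
  · simp

lemma Lambda_ketS (d : ℕ) (k : EuclideanSpace ℝ (Fin d)) :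
    Lambda d k (ketS (2 * d)) = ((Real.sqrt (2 * d : ℕ) : ℂ))⁻¹ •
      ∑ b : Fin (2 * d), Complex.exp (-Complex.I * (⟪k, eR d b⟫ : ℝ)) • ket b := by
  rw [ketS, map_smul, map_sum]
  congr 1
  exact Finset.sum_congr rfl fun b _ => Lambda_ket d k b

lemma step (d : ℕ) (hd : 1 ≤ d) (k : EuclideanSpace ℝ (Fin d)) (a : Fin (2 * d)) :
    (Lambda d k * groverC (2 * d)) (ket a)
      = (-(((2 * d : ℕ) : ℂ))⁻¹) • ∑ b : Fin (2 * d),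
          (Complex.exp (-Complex.I * (⟪k, eR d b⟫ : ℝ)) *
            (((2 * d : ℕ) : ℂ) * (if b = a then 1 else 0) - 2)) • ket b := by
  have hm : (0:ℕ) < 2 * d := by omega
  set M : ℂ := ((2 * d : ℕ) : ℂ) with hM
  have hMne : M ≠ 0 := by
    simp [hM]; omega
  set s : ℂ := ((Real.sqrt (2 * d : ℕ) : ℝ) : ℂ) with hs
  have hss : s * s = M := by
    rw [hs, ← Complex.ofReal_mul, Real.mul_self_sqrt (by positivity)]
    norm_cast
  set f : Fin (2*d) → ℂ := fun b => Complex.exp (-Complex.I * (⟪k, eR d b⟫ : ℝ)) with hf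
  set T : H (2*d) := ∑ b : Fin (2*d), f b • ket b with hT
  have hsum : ∑ b : Fin (2*d), (f b * (M * (if b = a then 1 else 0) - 2)) • ket b
      = (M * f a) • ket a - (2:ℂ) • T := by
    have h1 : ∀ b : Fin (2*d), (f b * (M * (if b = a then 1 else 0) - 2)) • ket b
        = (M * (if b = a then 1 else 0) * f b) • ket b - ((2:ℂ) * f b) • ket b := by
      intro b; rw [← sub_smul]; congr 1; ring
    rw [Finset.sum_congr rfl (fun b _ => h1 b), Finset.sum_sub_distrib]
    congr 1
    · rw [Finset.sum_eq_single a]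
      · simp
      · intro b _ hb; simp [hb]
      · simp
    · rw [hT, Finset.smul_sum]
      exact Finset.sum_congr rfl fun b _ => (smul_smul _ _ _).symm
  rw [ContinuousLinearMap.mul_apply, groverC_ket, map_sub, map_smul, Lambda_ketS, Lambda_ket]
  have h4 : (∑ b : Fin (2*d), Complex.exp (-Complex.I * (⟪k, eR d b⟫ : ℝ)) • ket b) = T := rfl
  have h5 : Complex.exp (-Complex.I * (⟪k, eR d a⟫ : ℝ)) = f a := rfl
  have h7 : ∑ b : Fin (2*d), (Complex.exp (-Complex.I * (⟪k, eR d b⟫ : ℝ)) *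
      (M * (if b = a then 1 else 0) - 2)) • ket b = (M * f a) • ket a - (2:ℂ) • T := hsum
  rw [h4, h5, h7]
  rw [smul_smul, smul_sub, smul_smul, smul_smul]
  have e1 : (2:ℂ) * s⁻¹ * s⁻¹ = 2 * M⁻¹ := by
    rw [mul_assoc, ← mul_inv, hss]
  have e2 : (-(M⁻¹)) * (M * f a) = -(f a) := by
    field_simp
  have e3 : (-(M⁻¹)) * 2 = -(2 * M⁻¹) := by ring
  rw [e1, e2, e3, neg_smul, neg_smul, sub_neg_eq_add]
  abel

lemma Xi0_cons (m n : ℕ) (hn : 1 ≤ n) (b : Fin m) (a : Fin n → Fin m) :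
    Xi0 m (n+1) (Fin.cons b a) =
      ((m : ℂ) * (if b = a ⟨0, hn⟩ then 1 else 0) - 2) * Xi0 m n a := by
  rw [Xi0, Fin.prod_univ_succ]
  congr 1
  · simp only [Fin.val_zero]
    have h01 : (0 : ℕ) + 1 < n + 1 := by omega
    simp only [h01, ↓reduceDIte]
    rfl
  · rw [Xi0]
    apply Finset.prod_congr rfl
    intro j _
    by_cases hj : (j : ℕ) + 1 < n
    · have hj' : ((Fin.succ j : Fin (n+1)) : ℕ) + 1 < n + 1 := by
        simp only [Fin.val_succ]; omega
      rw [dif_pos hj', dif_pos hj]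
      rfl
    · have hj' : ¬ (((Fin.succ j : Fin (n+1)) : ℕ) + 1 < n + 1) := by
        simp only [Fin.val_succ]; omega
      rw [dif_neg hj', dif_neg hj]

lemma sum_eR_cons {n : ℕ} {ι V : Type*} [AddCommMonoid V] (f : ι → V)
    (b : ι) (a : Fin n → ι) :
    ∑ j : Fin (n+1), f ((Fin.cons b a : Fin (n+1) → ι) j) = f b + ∑ j : Fin n, f (a j) := by
  rw [Fin.sum_univ_succ]
  simp [Fin.cons_zero, Fin.cons_succ]

lemma exp_phase_add {d : ℕ} (k : EuclideanSpace ℝ (Fin d)) (x y : EuclideanSpace ℝ (Fin d)) :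
    Complex.exp (-Complex.I * ((⟪k, x + y⟫ : ℝ) : ℂ)) =
      Complex.exp (-Complex.I * ((⟪k, x⟫ : ℝ) : ℂ)) *
        Complex.exp (-Complex.I * ((⟪k, y⟫ : ℝ) : ℂ)) := by
  rw [← Complex.exp_add, inner_add_right]
  push_cast
  ring_nf

/-- Eq. (18) of the paper:
`(Λ_k C_G)^n |s⟩ = ((-1)^{n+1} / m^{(2n-1)/2})
  Σ_{(a_1,…,a_n)} e^{-i k·(e(a_1)+⋯+e(a_n))} Ξ₀(a) |a_1⟩` with `m = 2d`. -/
theorem lambda_grover_pow_ketS (d : ℕ) (hd : 1 ≤ d) (k : EuclideanSpace ℝ (Fin d))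
    (n : ℕ) (hn : 1 ≤ n) :
    ((Lambda d k * groverC (2 * d)) ^ n) (ketS (2 * d))
      = ((-1 : ℂ) ^ (n + 1) / ((Real.sqrt (2 * d) : ℂ)) ^ (2 * n - 1)) •
          ∑ a : Fin n → Fin (2 * d),
            (Complex.exp (-Complex.I * ((⟪k, ∑ j : Fin n, eR d (a j)⟫ : ℝ))) *
              Xi0 (2 * d) n a) • ket (a ⟨0, by omega⟩) := by
  have hm : (0:ℕ) < 2 * d := by omega
  have hScast : ((Real.sqrt (2 * d) : ℝ) : ℂ) = ((Real.sqrt ((2 * d : ℕ) : ℝ) : ℝ) : ℂ) := by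
    norm_cast
  induction n, hn using Nat.le_induction with
  | base =>
    rw [pow_one, ContinuousLinearMap.mul_apply, groverC_ketS hm, Lambda_ketS]
    rw [← Equiv.sum_comp (Equiv.funUnique (Fin 1) (Fin (2*d))).symm]
    have hXi : ∀ b : Fin (2*d),
        Xi0 (2*d) 1 ((Equiv.funUnique (Fin 1) (Fin (2*d))).symm b) = 1 := by
      intro b
      rw [Xi0]
      apply Finset.prod_eq_one
      intro j _
      rw [dif_neg (by omega)]
    simp only [hXi, mul_one, Fin.sum_univ_one]
    rw [hScast]
    norm_num
  | succ n hn IH =>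
    have hidx : (⟨0, by omega⟩ : Fin n) = ⟨0, hn⟩ := rfl
    set S : ℂ := ((Real.sqrt (2 * d) : ℝ) : ℂ) with hS
    set M : ℂ := ((2 * d : ℕ) : ℂ) with hM
    have hMne : M ≠ 0 := by simp [hM]; omega
    have hSne : S ≠ 0 := by rw [hScast]; exact sqrt_ne hm
    have hSS : S * S = M := by
      rw [hScast, ← Complex.ofReal_mul, Real.mul_self_sqrt (by positivity)]
      norm_cast
    have hc : ((-1 : ℂ) ^ (n + 1 + 1) / S ^ (2 * (n + 1) - 1))
        = ((-1 : ℂ) ^ (n + 1) / S ^ (2 * n - 1)) * (-(M⁻¹)) := by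
      have h2 : 2 * (n + 1) - 1 = (2 * n - 1) + 2 := by omega
      have h3 : S ^ (2 * n - 1) ≠ 0 := pow_ne_zero _ hSne
      rw [h2]
      rw [show S ^ (2 * n - 1 + 2) = S ^ (2 * n - 1) * M by rw [pow_add, pow_two, hSS]]
      rw [show ((-1:ℂ)) ^ (n + 1 + 1) = (-1) ^ (n + 1) * (-1) from pow_succ _ _]
      field_simp
    rw [pow_succ', ContinuousLinearMap.mul_apply, IH, map_smul, map_sum]
    simp only [map_smul, step d hd k]
    simp only [Finset.smul_sum, smul_smul]
    rw [Finset.sum_comm]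
    rw [← Equiv.sum_comp (Fin.consEquiv (fun _ => Fin (2*d)))]
    rw [Fintype.sum_prod_type]
    have hcons : ∀ (b : Fin (2*d)) (a : Fin n → Fin (2*d)),
        (Fin.consEquiv (fun _ => Fin (2*d))) (b, a) = Fin.cons b a := fun _ _ => rfl
    simp only [hcons, hc]
    apply Finset.sum_congr rfl
    intro b _
    apply Finset.sum_congr rfl
    intro a _
    have hk0 : ket ((Fin.cons b a : Fin (n+1) → Fin (2*d)) ⟨0, by omega⟩) = ket b := rfl
    rw [hk0, Xi0_cons (2*d) n hn b a]
    have hphase : (∑ j : Fin (n+1), eR d ((Fin.cons b a : Fin (n+1) → Fin (2*d)) j))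
        = eR d b + ∑ j : Fin n, eR d (a j) := sum_eR_cons (eR d) b a
    rw [hphase, exp_phase_add]
    congr 1
    rw [hidx]
    ring
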